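/- arXiv:2505.03482 — 3 statements merged into one kernel-verified Lean document; each statement's English description precedes it below -/
import Mathlib

section
/- Let S = {e ∈ ℝ^n : V_s e ≤ 1} be a compact polytope containing 0, W ⊆ ℝ^n a compact set, and Φ ∈ ℝ^{n×n}. Define e_max := (max_{e∈S} [V_s Φ e]_j)_j and w_max := (max_{w∈W} [V_s w]_j)_j componentwise. Then for nonnegative scalars α, α', the condition α·e_max + w_max ≤ α'·1 (componentwise) implies the set inclusion Φ(αS) ⊕ W ⊆ α'S, where αS := {αe : e ∈ S}. -/
open Set Pointwise

theorem stmt_6 {p n : ℕ} (Vs : Matrix (Fin p) (Fin n) ℝ)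
    (Φ : Matrix (Fin n) (Fin n) ℝ) (W : Set (Fin n → ℝ)) (hWc : IsCompact W)
    (hS : IsCompact {e : Fin n → ℝ | Vs.mulVec e ≤ 1})
    (h0 : (0 : Fin n → ℝ) ∈ {e : Fin n → ℝ | Vs.mulVec e ≤ 1})
    (emax wmax : Fin p → ℝ)
    (hemax : ∀ j, IsLUB ((fun e => Vs.mulVec (Φ.mulVec e) j) ''
      {e : Fin n → ℝ | Vs.mulVec e ≤ 1}) (emax j))
    (hwmax : ∀ j, IsLUB ((fun w => Vs.mulVec w j) '' W) (wmax j))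
    (α α' : ℝ) (hα : 0 ≤ α) (hα' : 0 ≤ α')
    (h : α • emax + wmax ≤ α' • (1 : Fin p → ℝ)) :
    ∀ e ∈ {e : Fin n → ℝ | Vs.mulVec e ≤ 1}, ∀ w ∈ W,
      Φ.mulVec (α • e) + w ∈ α' • {e : Fin n → ℝ | Vs.mulVec e ≤ 1} := by
  intro e he w hw
  have key : ∀ j, Vs.mulVec (Φ.mulVec (α • e) + w) j ≤ α' := by
    intro j
    have h1 : Vs.mulVec (Φ.mulVec e) j ≤ emax j := (hemax j).1 ⟨e, he, rfl⟩
    have h2 : Vs.mulVec w j ≤ wmax j := (hwmax j).1 ⟨w, hw, rfl⟩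
    have h3 := h j
    simp only [Pi.add_apply, Pi.smul_apply, Pi.one_apply, smul_eq_mul, mul_one] at h3
    have : Vs.mulVec (Φ.mulVec (α • e) + w) j
        = α * Vs.mulVec (Φ.mulVec e) j + Vs.mulVec w j := by
      simp [Matrix.mulVec_add, Matrix.mulVec_smul]
    rw [this]
    nlinarith
  rcases eq_or_lt_of_le hα' with hα'0 | hα'pos
  · have hx0 : Φ.mulVec (α • e) + w = 0 := by
      set x := Φ.mulVec (α • e) + w with hx
      have hxle : ∀ j, Vs.mulVec x j ≤ 0 := by
        intro j; have := key j; linarith [this, hα'0.symm ▸ this]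
      by_contra hne
      obtain ⟨C, hC⟩ := hS.isBounded.exists_norm_le
      have hxnorm : 0 < ‖x‖ := norm_pos_iff.mpr hne
      set t : ℝ := (|C| + 1) / ‖x‖ with ht
      have ht0 : 0 ≤ t := div_nonneg (by positivity) hxnorm.le
      have hmem : t • x ∈ {e : Fin n → ℝ | Vs.mulVec e ≤ 1} := by
        intro j
        have : Vs.mulVec (t • x) j = t * Vs.mulVec x j := by
          simp [Matrix.mulVec_smul]
        rw [this]
        have := mul_nonpos_of_nonneg_of_nonpos ht0 (hxle j)
        simpa using this.trans zero_le_one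
      have hb := hC _ hmem
      rw [norm_smul, Real.norm_eq_abs, abs_of_nonneg ht0, ht,
        div_mul_cancel₀ _ (ne_of_gt hxnorm)] at hb
      have : C ≤ |C| := le_abs_self C
      linarith
    rw [hx0, ← hα'0]
    exact ⟨0, h0, by simp⟩
  · refine ⟨α'⁻¹ • (Φ.mulVec (α • e) + w), ?_, ?_⟩
    · intro j
      have hk := key j
      rw [Matrix.mulVec_smul, Pi.smul_apply, Pi.one_apply, smul_eq_mul,
        inv_mul_le_iff₀ hα'pos, mul_one]
      exact hk
    · show α' • _ = _
      rw [smul_inv_smul₀ (ne_of_gt hα'pos)]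
end

section
/- Conversely, for the sets of the previous context, if α > 0 and Φ(αS) ⊕ W ⊆ α'S, then α·e_max + w_max ≤ α'·1 componentwise; hence for α ≥ 0 the inclusion Φ(αS) ⊕ W ⊆ α'S holds if and only if α·e_max + w_max ≤ α'·1 (for α = 0 the forward direction requires 0 ∈ Φ S, e.g. 0 ∈ S). -/
open Set Pointwise

lemma aux_zero_of_mulVec_nonpos {p n : ℕ} (Vs : Matrix (Fin p) (Fin n) ℝ)
    (hS : IsCompact {e : Fin n → ℝ | Vs.mulVec e ≤ 1})
    (x : Fin n → ℝ) (hx : Vs.mulVec x ≤ 0) : x = 0 := by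
  by_contra hne
  obtain ⟨C, hC⟩ := isBounded_iff_forall_norm_le.mp hS.isBounded
  have hxpos : 0 < ‖x‖ := norm_pos_iff.mpr hne
  set t : ℝ := (max C 0 + 1) / ‖x‖ with ht
  have ht0 : 0 ≤ t := div_nonneg (by positivity) hxpos.le
  have hmem : t • x ∈ {e : Fin n → ℝ | Vs.mulVec e ≤ 1} := by
    intro j
    have he : Vs.mulVec (t • x) j = t * Vs.mulVec x j := by
      rw [Matrix.mulVec_smul]; rfl
    rw [he]
    calc t * Vs.mulVec x j ≤ 0 := mul_nonpos_of_nonneg_of_nonpos ht0 (hx j)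
      _ ≤ 1 := zero_le_one
  have hnorm : ‖t • x‖ = max C 0 + 1 := by
    rw [norm_smul, Real.norm_of_nonneg ht0, ht, div_mul_cancel₀]
    exact hxpos.ne'
  have h1 : max C 0 + 1 ≤ C := hnorm ▸ hC _ hmem
  have h2 : C ≤ max C 0 := le_max_left _ _
  linarith

theorem stmt_7 {p n : ℕ} (Vs : Matrix (Fin p) (Fin n) ℝ)
    (Φ : Matrix (Fin n) (Fin n) ℝ) (W : Set (Fin n → ℝ))
    (hWc : IsCompact W) (hWne : W.Nonempty)
    (hS : IsCompact {e : Fin n → ℝ | Vs.mulVec e ≤ 1})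
    (h0 : (0 : Fin n → ℝ) ∈ {e : Fin n → ℝ | Vs.mulVec e ≤ 1})
    (emax wmax : Fin p → ℝ)
    (hemax : ∀ j, IsLUB ((fun e => Vs.mulVec (Φ.mulVec e) j) ''
      {e : Fin n → ℝ | Vs.mulVec e ≤ 1}) (emax j))
    (hwmax : ∀ j, IsLUB ((fun w => Vs.mulVec w j) '' W) (wmax j)) :
    (∀ α α' : ℝ, 0 < α → 0 ≤ α' →
      (∀ e ∈ {e : Fin n → ℝ | Vs.mulVec e ≤ 1}, ∀ w ∈ W,
        Φ.mulVec (α • e) + w ∈ α' • {e : Fin n → ℝ | Vs.mulVec e ≤ 1}) →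
      α • emax + wmax ≤ α' • (1 : Fin p → ℝ)) ∧
    (∀ α α' : ℝ, 0 ≤ α → 0 ≤ α' →
      ((∀ e ∈ {e : Fin n → ℝ | Vs.mulVec e ≤ 1}, ∀ w ∈ W,
        Φ.mulVec (α • e) + w ∈ α' • {e : Fin n → ℝ | Vs.mulVec e ≤ 1}) ↔
      α • emax + wmax ≤ α' • (1 : Fin p → ℝ))) := by
  set S := {e : Fin n → ℝ | Vs.mulVec e ≤ 1} with hSdef
  -- value of Vs.mulVec at the combined point
  have hval : ∀ (α : ℝ) (e w : Fin n → ℝ) (j : Fin p),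
      Vs.mulVec (Φ.mulVec (α • e) + w) j
        = α * Vs.mulVec (Φ.mulVec e) j + Vs.mulVec w j := by
    intro α e w j
    rw [Matrix.mulVec_add, Matrix.mulVec_smul, Matrix.mulVec_smul]
    rfl
  -- forward direction
  have fwd : ∀ α α' : ℝ, 0 ≤ α → 0 ≤ α' →
      (∀ e ∈ S, ∀ w ∈ W, Φ.mulVec (α • e) + w ∈ α' • S) →
      α • emax + wmax ≤ α' • (1 : Fin p → ℝ) := by
    intro α α' hα hα' hinc j
    have key : ∀ e ∈ S, ∀ w ∈ W,
        α * Vs.mulVec (Φ.mulVec e) j + Vs.mulVec w j ≤ α' := by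
      intro e he w hw
      obtain ⟨s, hs, hsx⟩ := hinc e he w hw
      have : Vs.mulVec (Φ.mulVec (α • e) + w) j = α' * Vs.mulVec s j := by
        rw [← hsx, Matrix.mulVec_smul]; rfl
      rw [hval] at this
      rw [this]
      calc α' * Vs.mulVec s j ≤ α' * 1 :=
            mul_le_mul_of_nonneg_left (hs j) hα'
        _ = α' := mul_one α'
    have step1 : ∀ w ∈ W, α * emax j + Vs.mulVec w j ≤ α' := by
      intro w hw
      rcases eq_or_lt_of_le hα with h | h
      · have := key 0 h0 w hw
        simp only [← h, zero_mul] at this ⊢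
        exact this
      · have hub : emax j ≤ (α' - Vs.mulVec w j) / α := by
          apply (hemax j).2
          rintro _ ⟨e, he, rfl⟩
          rw [le_div_iff₀ h]
          have := key e he w hw
          linarith [key e he w hw]
        have := (mul_le_mul_of_nonneg_left hub h.le)
        rw [mul_div_cancel₀ _ h.ne'] at this
        linarith
    have step2 : wmax j ≤ α' - α * emax j := by
      apply (hwmax j).2
      rintro _ ⟨w, hw, rfl⟩
      linarith [step1 w hw]
    have : α • emax j + wmax j ≤ α' * 1 := by
      simp only [smul_eq_mul, mul_one]; linarith
    simpa using this
  -- backward direction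
  have bwd : ∀ α α' : ℝ, 0 ≤ α → 0 ≤ α' →
      α • emax + wmax ≤ α' • (1 : Fin p → ℝ) →
      ∀ e ∈ S, ∀ w ∈ W, Φ.mulVec (α • e) + w ∈ α' • S := by
    intro α α' hα hα' hle e he w hw
    set x := Φ.mulVec (α • e) + w with hx
    have hxle : ∀ j, Vs.mulVec x j ≤ α' := by
      intro j
      rw [hval]
      have h1 : Vs.mulVec (Φ.mulVec e) j ≤ emax j :=
        (hemax j).1 ⟨e, he, rfl⟩
      have h2 : Vs.mulVec w j ≤ wmax j := (hwmax j).1 ⟨w, hw, rfl⟩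
      have h3 := hle j
      simp only [Pi.add_apply, Pi.smul_apply, Pi.one_apply, smul_eq_mul,
        mul_one] at h3
      nlinarith
    rcases eq_or_lt_of_le hα' with h | h
    · have hx0 : x = 0 := by
        apply aux_zero_of_mulVec_nonpos Vs hS
        intro j
        rw [← h] at hxle
        exact hxle j
      exact ⟨0, h0, by show α' • (0 : Fin n → ℝ) = x; rw [smul_zero, hx0]⟩
    · refine ⟨α'⁻¹ • x, ?_, ?_⟩
      · intro j
        have : Vs.mulVec (α'⁻¹ • x) j = α'⁻¹ * Vs.mulVec x j := by
          rw [Matrix.mulVec_smul]; rfl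
        rw [this, Pi.one_apply, inv_mul_le_iff₀ h, mul_one]
        exact hxle j
      · show α' • α'⁻¹ • x = x
        rw [smul_smul, mul_inv_cancel₀ h.ne', one_smul]
  constructor
  · intro α α' hα hα' hinc
    exact fwd α α' hα.le hα' hinc
  · intro α α' hα hα'
    exact ⟨fwd α α' hα hα', bwd α α' hα hα'⟩
end

section
/- Suppose n ≥ N−1 is an integer such that every (z, α) ∈ Ω(n) satisfies F̄Ψ^{n+1} z ≤ 1 − h, where Ω(n) := {(z,α) ∈ ℝ^d × ℝ_{≥0}^N : α_i e_max + w_max ≤ α_{i+1}·1 for 0 ≤ i ≤ N−1 (with α_N := 1), and F̄Ψ^i z ≤ 1 − α_i h for 0 ≤ i ≤ n, where α_i := 1 for i ≥ N}. Then every (z,α) ∈ Ω(n) in fact satisfies F̄Ψ^i z ≤ 1 − α_i h for all i ∈ ℕ (with α_i := 1 for i ≥ N); i.e. Ω(n) = Ω(∞). (Hint: for (z,α) ∈ Ω(n), the shifted point (Ψz, (α_1,…,α_{N−1},1)) again lies in Ω(n), and induct.) -/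
open Set

/-- Extension of a finite scaling sequence by `1` beyond the horizon `N`. -/
def extScal {N : ℕ} (α : Fin N → ℝ) (i : ℕ) : ℝ :=
  if hi : i < N then α ⟨i, hi⟩ else 1

/-- The constraint set `Ω(n)` of the homothetic tube MPC problem. -/
def Omega {c d p N : ℕ} (Fbar : Matrix (Fin c) (Fin d) ℝ)
    (Ψ : Matrix (Fin d) (Fin d) ℝ) (h : Fin c → ℝ) (emax : Fin p → ℝ)
    (wmax : Fin p → ℝ) (n : ℕ) : Set ((Fin d → ℝ) × (Fin N → ℝ)) :=
  {zα | (∀ i, 0 ≤ zα.2 i) ∧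
    (∀ i ≤ n, Fbar.mulVec ((Ψ ^ i).mulVec zα.1) ≤ 1 - extScal zα.2 i • h) ∧
    (∀ i < N, extScal zα.2 i • emax + wmax ≤ extScal zα.2 (i + 1) • (1 : Fin p → ℝ))}

/-- Shift of a scaling sequence, appending `1` at the end. -/
def shiftScal {N : ℕ} (α : Fin N → ℝ) (j : Fin N) : ℝ := extScal α ((j : ℕ) + 1)

lemma extScal_of_ge' {N : ℕ} (α : Fin N → ℝ) {i : ℕ} (hi : N ≤ i) :
    extScal α i = 1 := by
  unfold extScal
  rw [dif_neg (by omega)]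

lemma extScal_shift {N : ℕ} (α : Fin N → ℝ) (i : ℕ) :
    extScal (shiftScal α) i = extScal α (i + 1) := by
  by_cases hi : i < N
  · rw [extScal, dif_pos hi]; rfl
  · rw [extScal_of_ge' _ (le_of_not_gt hi), extScal_of_ge' _ (by omega)]

lemma extScal_nonneg {N : ℕ} (α : Fin N → ℝ) (hα : ∀ j, 0 ≤ α j) (i : ℕ) :
    0 ≤ extScal α i := by
  unfold extScal
  split_ifs with hi
  · exact hα _
  · norm_num

lemma extScal_of_ge {N : ℕ} (α : Fin N → ℝ) {i : ℕ} (hi : N ≤ i) :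
    extScal α i = 1 := by
  unfold extScal
  rw [dif_neg (by omega)]

lemma shift_mem {c d p N : ℕ} (Fbar : Matrix (Fin c) (Fin d) ℝ)
    (Ψ : Matrix (Fin d) (Fin d) ℝ) (h : Fin c → ℝ) (emax wmax : Fin p → ℝ)
    (hew : emax + wmax ≤ 1)
    (n : ℕ) (hn : N - 1 ≤ n)
    (hsat : ∀ zα ∈ Omega (N := N) Fbar Ψ h emax wmax n,
      Fbar.mulVec ((Ψ ^ (n + 1)).mulVec zα.1) ≤ 1 - h)
    (z : Fin d → ℝ) (α : Fin N → ℝ)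
    (hz : (z, α) ∈ Omega (N := N) Fbar Ψ h emax wmax n) :
    (Ψ.mulVec z, shiftScal α) ∈ Omega (N := N) Fbar Ψ h emax wmax n := by
  obtain ⟨h0, h1, h2⟩ := hz
  refine ⟨?_, ?_, ?_⟩
  · intro j
    exact extScal_nonneg α h0 _
  · intro i hi
    have hmv : (Ψ ^ i).mulVec (Ψ.mulVec z) = (Ψ ^ (i + 1)).mulVec z := by
      rw [Matrix.mulVec_mulVec, ← pow_succ]
    simp only [hmv, extScal_shift]
    rcases Nat.lt_or_ge i n with hlt | hge
    · exact h1 (i + 1) (by omega)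
    · have hi' : i = n := le_antisymm hi hge
      have := hsat (z, α) ⟨h0, h1, h2⟩
      rw [hi', extScal_of_ge α (by omega), one_smul]
      exact this
  · intro i hi
    simp only [extScal_shift]
    rcases Nat.lt_or_ge (i + 1) N with hlt | hge
    · exact h2 (i + 1) hlt
    · rw [extScal_of_ge α hge, extScal_of_ge α (by omega), one_smul, one_smul]
      exact hew

lemma extScal_iterate {N : ℕ} (α : Fin N → ℝ) (k i : ℕ) :
    extScal (shiftScal^[k] α) i = extScal α (i + k) := by
  induction k generalizing i with
  | zero => rfl
  | succ k ih =>
    rw [Function.iterate_succ_apply', extScal_shift, ih]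
    ring_nf

theorem stmt_11 {c d p N : ℕ} (Fbar : Matrix (Fin c) (Fin d) ℝ)
    (Ψ : Matrix (Fin d) (Fin d) ℝ) (h : Fin c → ℝ) (emax wmax : Fin p → ℝ)
    (hh : (0 : Fin c → ℝ) ≤ h) (hew : emax + wmax ≤ 1)
    (n : ℕ) (hn : N - 1 ≤ n)
    (hsat : ∀ zα ∈ Omega (N := N) Fbar Ψ h emax wmax n,
      Fbar.mulVec ((Ψ ^ (n + 1)).mulVec zα.1) ≤ 1 - h) :
    ∀ zα ∈ Omega (N := N) Fbar Ψ h emax wmax n, ∀ i : ℕ,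
      Fbar.mulVec ((Ψ ^ i).mulVec zα.1) ≤ 1 - extScal zα.2 i • h := by
  rintro ⟨z, α⟩ hmem i
  have key : ∀ k, ((Ψ ^ k).mulVec z, shiftScal^[k] α) ∈
      Omega (N := N) Fbar Ψ h emax wmax n := by
    intro k
    induction k with
    | zero => simpa using hmem
    | succ k ih =>
      have := shift_mem Fbar Ψ h emax wmax hew n hn hsat _ _ ih
      have hmv : Ψ.mulVec ((Ψ ^ k).mulVec z) = (Ψ ^ (k + 1)).mulVec z := by
        rw [Matrix.mulVec_mulVec, ← pow_succ']
      rw [Function.iterate_succ_apply']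
      rwa [hmv] at this
  rcases Nat.lt_or_ge n i with hgt | hle
  · -- i > n
    set k := i - (n + 1) with hk
    have hik : i = n + 1 + k := by omega
    have := hsat _ (key k)
    simp only at this
    have hmv : (Ψ ^ (n + 1)).mulVec ((Ψ ^ k).mulVec z) = (Ψ ^ i).mulVec z := by
      rw [Matrix.mulVec_mulVec, ← pow_add, ← hik]
    rw [hmv] at this
    rw [extScal_of_ge α (by omega), one_smul]
    exact this
  · exact hmem.2.1 i hle
end
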